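/- Well-founded integral systems have unique solutions: let R be a commutative ring which is a ℚ-algebra and let H, G be formal power series in the two variables z, y over R such that the constant coefficient of H and the coefficient of the monomial y in H both vanish. Then there exists exactly one formal power series S in z over R with zero constant coefficient such that the formal derivative of S − H(z,S) equals G(z,S) (equivalently, S = H(z,S) + I where I is the unique formal antiderivative of G(z,S) with zero constant term). -/

import Mathlib

/-- Substitution of a family `s` of one-variable formal power series (each intended to have
zero constant coefficient) into a multivariate formal power series `H` in `k` variables:
the coefficient of `z^n` in `H(s)` is the (finite) sum over all monomials `d` of the
coefficient of `d` in `H` times the coefficient of `z^n` in `∏ j, (s j) ^ (d j)`.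
When every `s j` has zero constant coefficient, only monomials `d` with
`∑ j, d j ≤ n` (in particular `d ≤ (n, …, n)`) can contribute, so this is the usual
well-defined substitution. -/
noncomputable def mvSubst {R : Type*} [CommSemiring R] {k : ℕ}
    (H : MvPowerSeries (Fin k) R) (s : Fin k → PowerSeries R) : PowerSeries R :=
  PowerSeries.mk fun n =>
    ∑ d ∈ Finset.Iic (Finsupp.equivFunOnFinite.symm fun _ : Fin k => n),
      MvPowerSeries.coeff d H * PowerSeries.coeff n (∏ j, (s j) ^ (d j))

namespace IntegralSystemAux

open PowerSeries

section Integ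
variable {R : Type*} [CommRing R] [Algebra ℚ R]

lemma inv_nat_smul_mul_nat (n : ℕ) (hn : n ≠ 0) (b : R) :
    ((n : ℚ))⁻¹ • b * (n : R) = b := by
  have h1 : (n : R) = algebraMap ℚ R (n : ℚ) := by simp
  rw [smul_mul_assoc, h1, mul_comm, ← Algebra.smul_def, smul_smul,
    inv_mul_cancel₀ (by exact_mod_cast hn), one_smul]

lemma inv_nat_smul_mul_nat' (n : ℕ) (hn : n ≠ 0) (b : R) :
    ((n : ℚ))⁻¹ • (b * (n : R)) = b := by
  rw [← smul_mul_assoc]; exact inv_nat_smul_mul_nat n hn b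

/-- The formal antiderivative with zero constant term. -/
noncomputable def integ (J : PowerSeries R) : PowerSeries R :=
  PowerSeries.mk fun n => if n = 0 then 0 else ((n : ℚ))⁻¹ • PowerSeries.coeff (n-1) J

lemma constantCoeff_integ (J : PowerSeries R) : constantCoeff (integ J) = 0 := by
  rw [← coeff_zero_eq_constantCoeff_apply, integ, coeff_mk]; simp

lemma derivativeFun_integ (J : PowerSeries R) : derivativeFun (integ J) = J := by
  ext n
  rw [show derivativeFun (integ J) = derivative R (integ J) from rfl, coeff_derivativeFun, integ, coeff_mk]
  simp only [Nat.succ_ne_zero, if_false, Nat.add_sub_cancel]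
  have := inv_nat_smul_mul_nat (n+1) (Nat.succ_ne_zero n) (coeff n J)
  push_cast at this ⊢
  exact this

lemma eq_integ_of_deriv (F J : PowerSeries R) (h0 : constantCoeff F = 0)
    (hd : derivativeFun F = J) : F = integ J := by
  ext n
  rw [integ, coeff_mk]
  cases n with
  | zero => simpa using h0
  | succ m =>
    have : coeff m J = coeff (m+1) F * (m+1) := by rw [← hd, show derivativeFun F = derivative R F from rfl, coeff_derivativeFun]
    simp only [Nat.succ_ne_zero, if_false, Nat.add_sub_cancel, this]
    have := inv_nat_smul_mul_nat' (m+1) (Nat.succ_ne_zero m) (coeff (m+1) F)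
    push_cast at this ⊢
    exact this.symm

lemma integ_sub (J K : PowerSeries R) : integ J - integ K = integ (J - K) := by
  ext n; simp [integ, coeff_mk, smul_sub, apply_ite]
  split <;> simp [smul_sub]

lemma X_pow_dvd_integ {J : PowerSeries R} {n : ℕ} (h : (X : R⟦X⟧)^n ∣ J) :
    (X : R⟦X⟧)^(n+1) ∣ integ J := by
  rw [X_pow_dvd_iff] at h ⊢
  intro m hm
  rw [integ, coeff_mk]
  split
  · rfl
  · rw [h (m-1) (by omega), smul_zero]

end Integ

section Congr
variable {R : Type*} [CommRing R]

lemma pow_sub_pow_dvd {S T : PowerSeries R} (hS : constantCoeff S = 0)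
    (hT : constantCoeff T = 0) {n : ℕ} (h : (X : R⟦X⟧)^n ∣ S - T) (k : ℕ) :
    (X : R⟦X⟧)^(n+k) ∣ S^(k+1) - T^(k+1) := by
  induction k with
  | zero => simpa using h
  | succ k ih =>
    have hXS : (X : R⟦X⟧) ∣ S := X_dvd_iff.mpr hS
    have hXT : (X : R⟦X⟧) ∣ T := X_dvd_iff.mpr hT
    have key : S^(k+2) - T^(k+2) = (S - T) * S^(k+1) + T * (S^(k+1) - T^(k+1)) := by ring
    rw [key]
    refine dvd_add ?_ ?_
    · have : (X : R⟦X⟧)^(n+(k+1)) = X^n * X^(k+1) := by ring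
      rw [this]
      exact mul_dvd_mul h (pow_dvd_pow_of_dvd hXS (k+1))
    · have : (X : R⟦X⟧)^(n+(k+1)) = X * X^(n+k) := by ring
      rw [this]
      exact mul_dvd_mul hXT ih

lemma prod_congr_dvd {S T : PowerSeries R} (hS : constantCoeff S = 0)
    (hT : constantCoeff T = 0) {n : ℕ} (h : (X : R⟦X⟧)^n ∣ S - T) (d0 k : ℕ) :
    (X : R⟦X⟧)^(n + d0 + k) ∣ X^d0 * S^(k+1) - X^d0 * T^(k+1) := by
  rw [← mul_sub]
  have : (X : R⟦X⟧)^(n + d0 + k) = X^d0 * X^(n+k) := by ring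
  rw [this]
  exact mul_dvd_mul_left _ (pow_sub_pow_dvd hS hT h k)

lemma coeff_mvSubst_two (F : MvPowerSeries (Fin 2) R) (S : PowerSeries R) (m : ℕ) :
    coeff m (mvSubst F ![X, S]) =
    ∑ d ∈ Finset.Iic (Finsupp.equivFunOnFinite.symm fun _ : Fin 2 => m),
      MvPowerSeries.coeff d F * coeff m (X^(d 0) * S^(d 1)) := by
  rw [mvSubst, coeff_mk]
  refine Finset.sum_congr rfl fun d _ => ?_
  congr 2
  rw [Fin.prod_univ_two]
  simp

lemma constantCoeff_mvSubst_zero (F : MvPowerSeries (Fin 2) R)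
    (hF0 : MvPowerSeries.coeff 0 F = 0) (S : PowerSeries R) :
    constantCoeff (mvSubst F ![X, S]) = 0 := by
  rw [← coeff_zero_eq_constantCoeff_apply, coeff_mvSubst_two]
  refine Finset.sum_eq_zero fun d hd => ?_
  have hd0 : d = 0 := by
    ext a
    have h := Finset.mem_Iic.mp hd
    rw [Finsupp.le_def] at h
    simpa using h a
  rw [hd0, hF0, zero_mul]

lemma mvSubst_congr_G (F : MvPowerSeries (Fin 2) R) {S T : PowerSeries R}
    (hS : constantCoeff S = 0) (hT : constantCoeff T = 0) {n : ℕ}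
    (h : (X:R⟦X⟧)^n ∣ S - T) :
    (X:R⟦X⟧)^n ∣ mvSubst F ![X, S] - mvSubst F ![X, T] := by
  rw [X_pow_dvd_iff]
  intro m hm
  rw [map_sub, coeff_mvSubst_two, coeff_mvSubst_two, ← Finset.sum_sub_distrib]
  refine Finset.sum_eq_zero fun d _ => ?_
  rw [← mul_sub, ← map_sub]
  rcases Nat.eq_zero_or_pos (d 1) with h1 | h1
  · rw [h1]; simp
  · obtain ⟨k, hk⟩ := Nat.exists_eq_succ_of_ne_zero h1.ne'
    rw [hk]
    have := prod_congr_dvd hS hT h (d 0) k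
    rw [X_pow_dvd_iff] at this
    rw [this m (lt_of_lt_of_le hm (by omega)), mul_zero]

lemma mvSubst_congr_H (H : MvPowerSeries (Fin 2) R)
    (hHy : MvPowerSeries.coeff (Finsupp.single 1 1) H = 0)
    {S T : PowerSeries R}
    (hS : constantCoeff S = 0) (hT : constantCoeff T = 0) {n : ℕ}
    (h : (X:R⟦X⟧)^n ∣ S - T) :
    (X:R⟦X⟧)^(n+1) ∣ mvSubst H ![X, S] - mvSubst H ![X, T] := by
  rw [X_pow_dvd_iff]
  intro m hm
  rw [map_sub, coeff_mvSubst_two, coeff_mvSubst_two, ← Finset.sum_sub_distrib]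
  refine Finset.sum_eq_zero fun d _ => ?_
  rw [← mul_sub, ← map_sub]
  rcases Nat.eq_zero_or_pos (d 1) with h1 | h1
  · rw [h1]; simp
  · obtain ⟨k, hk⟩ := Nat.exists_eq_succ_of_ne_zero h1.ne'
    by_cases hcrit : d 0 = 0 ∧ k = 0
    · have hd : d = Finsupp.single 1 1 := by
        ext a
        fin_cases a
        · simpa [Finsupp.single_apply] using hcrit.1
        · have h2 : (Finsupp.single (1 : Fin 2) 1) 1 = 1 := Finsupp.single_eq_same
          show d 1 = (Finsupp.single (1 : Fin 2) 1) 1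
          rw [h2]; omega
      rw [hd, hHy, zero_mul]
    · rw [hk]
      have := prod_congr_dvd hS hT h (d 0) k
      rw [X_pow_dvd_iff] at this
      rw [this m (lt_of_lt_of_le hm (by omega)), mul_zero]

end Congr

section Main
variable {R : Type*} [CommRing R] [Algebra ℚ R]

/-- The fixed-point map `S ↦ H(z,S) + ∫ G(z,S)`. -/
noncomputable def Phi (H G : MvPowerSeries (Fin 2) R) (S : PowerSeries R) : PowerSeries R :=
  mvSubst H ![X, S] + integ (mvSubst G ![X, S])

variable (H G : MvPowerSeries (Fin 2) R)
    (hH00 : MvPowerSeries.coeff 0 H = 0)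
    (hHy : MvPowerSeries.coeff (Finsupp.single 1 1) H = 0)

include hH00 in
lemma constantCoeff_Phi (S : PowerSeries R) : constantCoeff (Phi H G S) = 0 := by
  rw [Phi, map_add, constantCoeff_mvSubst_zero H hH00 S, constantCoeff_integ, add_zero]

include hHy in
lemma Phi_contract {S T : PowerSeries R}
    (hS : constantCoeff S = 0) (hT : constantCoeff T = 0) {n : ℕ}
    (h : (X:R⟦X⟧)^n ∣ S - T) :
    (X:R⟦X⟧)^(n+1) ∣ Phi H G S - Phi H G T := by
  have e : Phi H G S - Phi H G T = (mvSubst H ![X,S] - mvSubst H ![X,T]) +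
      (integ (mvSubst G ![X,S]) - integ (mvSubst G ![X,T])) := by
    rw [Phi, Phi]; ring
  rw [e, integ_sub]
  exact dvd_add (mvSubst_congr_H H hHy hS hT h)
    (X_pow_dvd_integ (mvSubst_congr_G G hS hT h))

/-- Iterates of the fixed-point map starting at `0`. -/
noncomputable def Sseq (H G : MvPowerSeries (Fin 2) R) : ℕ → PowerSeries R
  | 0 => 0
  | n+1 => Phi H G (Sseq H G n)

include hH00 in
lemma constantCoeff_Sseq (n : ℕ) : constantCoeff (Sseq H G n) = 0 := by
  cases n with
  | zero => simp [Sseq]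
  | succ n => exact constantCoeff_Phi H G hH00 _

include hH00 hHy in
lemma Sseq_succ_congr (n : ℕ) : (X:R⟦X⟧)^n ∣ Sseq H G (n+1) - Sseq H G n := by
  induction n with
  | zero => simpa using one_dvd _
  | succ n ih =>
    exact Phi_contract H G hHy (constantCoeff_Sseq H G hH00 _)
      (constantCoeff_Sseq H G hH00 _) ih

/-- The limit of the iterates. -/
noncomputable def Slim (H G : MvPowerSeries (Fin 2) R) : PowerSeries R :=
  PowerSeries.mk fun n => coeff n (Sseq H G (n+1))

include hH00 hHy in
lemma coeff_Sseq_stable {n m : ℕ} (hnm : n < m) :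
    coeff n (Sseq H G m) = coeff n (Slim H G) := by
  have hnm' : n + 1 ≤ m := hnm
  induction m, hnm' using Nat.le_induction with
  | base => rw [Slim, coeff_mk]
  | succ m hm ih =>
    have h := Sseq_succ_congr H G hH00 hHy m
    rw [X_pow_dvd_iff] at h
    have := h n (by omega)
    rw [map_sub, sub_eq_zero] at this
    rw [this]
    exact ih (by omega)

include hH00 in
lemma constantCoeff_Slim : constantCoeff (Slim H G) = 0 := by
  rw [← coeff_zero_eq_constantCoeff_apply, Slim, coeff_mk]
  rw [coeff_zero_eq_constantCoeff_apply]
  exact constantCoeff_Sseq H G hH00 1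

include hH00 hHy in
lemma Slim_fixed : Slim H G = Phi H G (Slim H G) := by
  ext n
  have h1 : (X:R⟦X⟧)^(n+1) ∣ Slim H G - Sseq H G (n+1) := by
    rw [X_pow_dvd_iff]
    intro m hm
    rw [map_sub, ← coeff_Sseq_stable H G hH00 hHy hm, sub_self]
  have h2 := Phi_contract H G hHy (constantCoeff_Slim H G hH00)
    (constantCoeff_Sseq H G hH00 (n+1)) h1
  rw [X_pow_dvd_iff] at h2
  have h3 := h2 n (by omega)
  rw [map_sub, sub_eq_zero] at h3
  have h4 : Phi H G (Sseq H G (n+1)) = Sseq H G (n+2) := rfl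
  rw [h4] at h3
  rw [coeff_Sseq_stable H G hH00 hHy (by omega : n < n + 2)] at h3
  exact h3.symm

include hH00 hHy in
lemma fixed_unique {S T : PowerSeries R}
    (hS0 : constantCoeff S = 0) (hT0 : constantCoeff T = 0)
    (hS : S = Phi H G S) (hT : T = Phi H G T) : S = T := by
  have key : ∀ n, (X:R⟦X⟧)^n ∣ S - T := by
    intro n
    induction n with
    | zero => simp
    | succ n ih =>
      rw [hS, hT]
      exact Phi_contract H G hHy hS0 hT0 ih
  ext n
  have := key (n+1)
  rw [X_pow_dvd_iff] at this
  have := this n (by omega)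
  rwa [map_sub, sub_eq_zero] at this

end Main

end IntegralSystemAux

namespace IntegralSystemAux
open PowerSeries in
theorem main {R : Type*} [CommRing R] [Algebra ℚ R]
    (H G : MvPowerSeries (Fin 2) R)
    (hH00 : MvPowerSeries.coeff 0 H = 0)
    (hHy : MvPowerSeries.coeff (Finsupp.single 1 1) H = 0) :
    ∃! S : PowerSeries R, PowerSeries.constantCoeff S = 0 ∧
      PowerSeries.derivativeFun (S - mvSubst H ![PowerSeries.X, S]) =
        mvSubst G ![PowerSeries.X, S] := by
  have cond_iff : ∀ S : PowerSeries R,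
      (PowerSeries.constantCoeff S = 0 ∧
        PowerSeries.derivativeFun (S - mvSubst H ![PowerSeries.X, S]) =
          mvSubst G ![PowerSeries.X, S]) ↔ S = Phi H G S := by
    intro S
    constructor
    · rintro ⟨hc, hd⟩
      have h0 : constantCoeff (S - mvSubst H ![X, S]) = 0 := by
        rw [map_sub, hc, constantCoeff_mvSubst_zero H hH00 S, sub_zero]
      have hF := eq_integ_of_deriv _ _ h0 hd
      rw [Phi, ← hF]
      ring
    · intro hfix
      have hc : constantCoeff S = 0 := by
        rw [hfix]; exact constantCoeff_Phi H G hH00 S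
      refine ⟨hc, ?_⟩
      have : S - mvSubst H ![X, S] = integ (mvSubst G ![X, S]) := by
        rw [sub_eq_iff_eq_add']
        exact hfix
      rw [this, derivativeFun_integ]
  refine ⟨Slim H G, ?_, ?_⟩
  · exact (cond_iff _).mpr (Slim_fixed H G hH00 hHy)
  · intro S hS
    have hfixS := (cond_iff S).mp hS
    exact fixed_unique H G hH00 hHy hS.1 (constantCoeff_Slim H G hH00)
      hfixS (Slim_fixed H G hH00 hHy)

end IntegralSystemAux

/-- **Well-founded integral systems have unique solutions.**  Over a commutative
`ℚ`-algebra `R`, if `H` is a two-variable formal power series (variables `0 = z`, `1 = y`)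
whose constant coefficient and coefficient of the monomial `y` both vanish, then for any
two-variable formal power series `G` there is exactly one formal power series `S` in `z`
with zero constant coefficient satisfying `(S - H(z,S))' = G(z,S)` (equivalently,
`S = H(z,S) + ∫ G(z,S)`). -/
theorem integral_system_existence_uniqueness {R : Type*} [CommRing R] [Algebra ℚ R]
    (H G : MvPowerSeries (Fin 2) R)
    (hH00 : MvPowerSeries.coeff 0 H = 0)
    (hHy : MvPowerSeries.coeff (Finsupp.single 1 1) H = 0) :
    ∃! S : PowerSeries R, PowerSeries.constantCoeff S = 0 ∧
      PowerSeries.derivativeFun (S - mvSubst H ![PowerSeries.X, S]) =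
        mvSubst G ![PowerSeries.X, S] :=
  IntegralSystemAux.main H G hH00 hHy
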